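/- arXiv:2309.04742 — 2 statements merged into one kernel-verified Lean document; each statement's English description precedes it below -/
import Mathlib

section
/- Let μ and ν be probability measures on ℝ^D with finite second moments, means m_μ, m_ν and covariance matrices P_μ, P_ν. Then for any coupling γ of μ and ν with (X, Y) ∼ γ, the operator norm of P_μ - P_ν is bounded by (tr(P_μ)^{1/2} + tr(P_ν)^{1/2}) · E[|X - m_μ - (Y - m_ν)|²]^{1/2}. -/
open MeasureTheory Matrix
open scoped RealInnerProductSpace ENNReal

/-- The `ℓ²` operator norm of a real `D × D` matrix. -/
noncomputable def matrixOpNorm {D : ℕ} (M : Matrix (Fin D) (Fin D) ℝ) : ℝ :=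
  ‖LinearMap.toContinuousLinearMap (Matrix.toEuclideanLin M)‖

private lemma myIntMul {α : Type*} [MeasurableSpace α] {m : Measure α}
    {f g : α → ℝ} (hf : MemLp f 2 m) (hg : MemLp g 2 m) :
    Integrable (fun x => f x * g x) m := by
  rw [← memLp_one_iff_integrable]
  exact MemLp.smul (p := 2) (q := 2) (r := 1) hg hf

private lemma myCS {α : Type*} [MeasurableSpace α] {m : Measure α}
    {f g : α → ℝ} (hf : MemLp f 2 m) (hg : MemLp g 2 m) :
    ∫ x, ‖f x‖ * ‖g x‖ ∂m ≤ Real.sqrt (∫ x, f x ^ 2 ∂m) * Real.sqrt (∫ x, g x ^ 2 ∂m) := by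
  have hmem : ∀ {h : α → ℝ}, MemLp h 2 m → MemLp (fun x => ‖h x‖) (ENNReal.ofReal 2) m := by
    intro h hh
    have : ENNReal.ofReal 2 = 2 := by simp [ENNReal.ofReal_ofNat]
    rw [this]; exact hh.norm
  have h := integral_mul_le_Lp_mul_Lq_of_nonneg (μ := m) (p := 2) (q := 2)
    Real.HolderConjugate.two_two
    (f := fun x => ‖f x‖) (g := fun x => ‖g x‖)
    (ae_of_all _ fun x => norm_nonneg _) (ae_of_all _ fun x => norm_nonneg _)
    (hmem hf) (hmem hg)
  calc ∫ x, ‖f x‖ * ‖g x‖ ∂m ≤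
      (∫ x, ‖f x‖ ^ (2:ℝ) ∂m) ^ (1/(2:ℝ)) * (∫ x, ‖g x‖ ^ (2:ℝ) ∂m) ^ (1/(2:ℝ)) := h
    _ = Real.sqrt (∫ x, f x ^ 2 ∂m) * Real.sqrt (∫ x, g x ^ 2 ∂m) := by
        rw [← Real.sqrt_eq_rpow, ← Real.sqrt_eq_rpow]
        congr 2 <;> refine integral_congr_ae (ae_of_all _ fun x => ?_) <;>
          simp [Real.rpow_two, sq_abs]

private lemma coord_memℒp {D : ℕ} {α : Type*} [MeasurableSpace α] {m : Measure α}
    {W : α → EuclideanSpace ℝ (Fin D)} (hW : MemLp W 2 m) (i : Fin D) :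
    MemLp (fun x => W x i) 2 m := by
  simpa [Function.comp_def] using (EuclideanSpace.proj (𝕜 := ℝ) i).comp_memLp' hW

private lemma sum_integral {D : ℕ} {α : Type*} [MeasurableSpace α] {m : Measure α}
    {W : α → EuclideanSpace ℝ (Fin D)} (hW : MemLp W 2 m)
    (u v : EuclideanSpace ℝ (Fin D)) :
    ∑ i, (∑ j, (∫ x, W x i * W x j ∂m) * v j) * u i = ∫ x, ⟪u, W x⟫ * ⟪v, W x⟫ ∂m := by
  have hint : ∀ i j : Fin D, Integrable (fun x => W x i * W x j) m := fun i j =>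
    myIntMul (coord_memℒp hW i) (coord_memℒp hW j)
  calc ∑ i, (∑ j, (∫ x, W x i * W x j ∂m) * v j) * u i
      = ∑ i, ∑ j, ∫ x, W x i * W x j * v j * u i ∂m := by
        refine Finset.sum_congr rfl fun i _ => ?_
        rw [Finset.sum_mul]
        refine Finset.sum_congr rfl fun j _ => ?_
        rw [← integral_mul_const, ← integral_mul_const]
    _ = ∫ x, ∑ i, ∑ j, W x i * W x j * v j * u i ∂m := by
        rw [integral_finset_sum _ (fun i _ => integrable_finset_sum _
          (fun j _ => ((hint i j).mul_const _).mul_const _))]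
        refine Finset.sum_congr rfl fun i _ => ?_
        rw [integral_finset_sum _ fun j _ => ((hint i j).mul_const _).mul_const _]
    _ = ∫ x, ⟪u, W x⟫ * ⟪v, W x⟫ ∂m := by
        refine integral_congr_ae (ae_of_all _ fun x => ?_)
        simp only [PiLp.inner_apply, RCLike.inner_apply, conj_trivial]
        rw [Finset.sum_mul_sum]
        exact Finset.sum_congr rfl fun i _ => Finset.sum_congr rfl fun j _ => by ring

private lemma inner_memℒp {D : ℕ} {α : Type*} [MeasurableSpace α] {m : Measure α}
    {W : α → EuclideanSpace ℝ (Fin D)} (hW : MemLp W 2 m) (u : EuclideanSpace ℝ (Fin D)) :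
    MemLp (fun x => ⟪u, W x⟫) 2 m := by
  simpa [Function.comp_def] using (innerSL ℝ u).comp_memLp' hW

private lemma trace_eq {D : ℕ} {α : Type*} [MeasurableSpace α] {m : Measure α}
    {W : α → EuclideanSpace ℝ (Fin D)} (hW : MemLp W 2 m)
    {P : Matrix (Fin D) (Fin D) ℝ} (hP : ∀ i j, P i j = ∫ x, W x i * W x j ∂m) :
    P.trace = ∫ x, ‖W x‖ ^ 2 ∂m := by
  have hint : ∀ i : Fin D, Integrable (fun x => W x i * W x i) m := fun i =>
    myIntMul (coord_memℒp hW i) (coord_memℒp hW i)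
  calc P.trace = ∑ i, ∫ x, W x i * W x i ∂m := by
        rw [Matrix.trace]; exact Finset.sum_congr rfl fun i _ => hP i i
    _ = ∫ x, ∑ i, W x i * W x i ∂m := (integral_finset_sum _ fun i _ => hint i).symm
    _ = ∫ x, ‖W x‖ ^ 2 ∂m := by
        refine integral_congr_ae (ae_of_all _ fun x => ?_)
        show ∑ i, W x i * W x i = ‖W x‖ ^ 2
        rw [EuclideanSpace.norm_eq, Real.sq_sqrt (by positivity)]
        exact Finset.sum_congr rfl fun i _ => by simp [sq_abs, sq]

private lemma norm_le_of_inner {E : Type*} [NormedAddCommGroup E] [InnerProductSpace ℝ E]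
    {w : E} {c : ℝ} (hc : 0 ≤ c) (h : ⟪w, w⟫ ≤ c * ‖w‖) : ‖w‖ ≤ c := by
  rcases eq_or_ne (‖w‖) 0 with h0 | h0
  · rw [h0]; exact hc
  · have hwpos : 0 < ‖w‖ := (norm_nonneg w).lt_of_ne (Ne.symm h0)
    have h1 : ‖w‖ * ‖w‖ ≤ c * ‖w‖ := by
      calc ‖w‖ * ‖w‖ = ⟪w, w⟫ := by rw [real_inner_self_eq_norm_sq]; ring
        _ ≤ c * ‖w‖ := h
    exact le_of_mul_le_mul_right h1 hwpos

private lemma main_aux {D : ℕ} {α : Type*} [MeasurableSpace α] {γ : Measure α}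
    [IsProbabilityMeasure γ] {A B : α → EuclideanSpace ℝ (Fin D)}
    (hA2 : MemLp A 2 γ) (hB2 : MemLp B 2 γ)
    {Pμ Pν : Matrix (Fin D) (Fin D) ℝ}
    (hPA : ∀ i j, Pμ i j = ∫ z, A z i * A z j ∂γ)
    (hPB : ∀ i j, Pν i j = ∫ z, B z i * B z j ∂γ) :
    matrixOpNorm (Pμ - Pν) ≤
      (Real.sqrt Pμ.trace + Real.sqrt Pν.trace) * Real.sqrt (∫ z, ‖A z - B z‖ ^ 2 ∂γ) := by
  have hAB2 : MemLp (fun z => A z - B z) 2 γ := hA2.sub hB2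
  set S := Real.sqrt (∫ z, ‖A z - B z‖ ^ 2 ∂γ) with hS
  set C := (Real.sqrt Pμ.trace + Real.sqrt Pν.trace) * S with hC
  have hCnn : 0 ≤ C := mul_nonneg (add_nonneg (Real.sqrt_nonneg _) (Real.sqrt_nonneg _))
    (Real.sqrt_nonneg _)
  -- key identity
  have hkey : ∀ u v : EuclideanSpace ℝ (Fin D),
      ⟪(Matrix.toEuclideanLin (Pμ - Pν)) v, u⟫ =
        ∫ z, (⟪u, A z⟫ * ⟪v, A z⟫ - ⟪u, B z⟫ * ⟪v, B z⟫) ∂γ := by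
    intro u v
    have h1 : ⟪(Matrix.toEuclideanLin (Pμ - Pν)) v, u⟫ =
        ∑ i, (∑ j, (Pμ i j - Pν i j) * v j) * u i := by
      simp only [PiLp.inner_apply, RCLike.inner_apply, conj_trivial,
        Matrix.toEuclideanLin_apply, Matrix.mulVec, dotProduct, Matrix.sub_apply,
        PiLp.toLp_apply]
      exact Finset.sum_congr rfl fun i _ => mul_comm _ _
    have hSA : ∑ i, (∑ j, Pμ i j * v j) * u i = ∫ z, ⟪u, A z⟫ * ⟪v, A z⟫ ∂γ := by
      rw [← sum_integral hA2 u v]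
      exact Finset.sum_congr rfl fun i _ => by
        congr 1
        exact Finset.sum_congr rfl fun j _ => by rw [hPA i j]
    have hSB : ∑ i, (∑ j, Pν i j * v j) * u i = ∫ z, ⟪u, B z⟫ * ⟪v, B z⟫ ∂γ := by
      rw [← sum_integral hB2 u v]
      exact Finset.sum_congr rfl fun i _ => by
        congr 1
        exact Finset.sum_congr rfl fun j _ => by rw [hPB i j]
    have h2 : ∑ i, (∑ j, (Pμ i j - Pν i j) * v j) * u i =
        (∑ i, (∑ j, Pμ i j * v j) * u i) - ∑ i, (∑ j, Pν i j * v j) * u i := by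
      rw [← Finset.sum_sub_distrib]
      refine Finset.sum_congr rfl fun i _ => ?_
      rw [← sub_mul, ← Finset.sum_sub_distrib]
      exact congrArg (· * u i) (Finset.sum_congr rfl fun j _ => sub_mul _ _ _)
    rw [h1, h2, hSA, hSB,
      ← integral_sub (myIntMul (inner_memℒp hA2 u) (inner_memℒp hA2 v))
        (myIntMul (inner_memℒp hB2 u) (inner_memℒp hB2 v))]
  -- bound
  have hbound : ∀ u v : EuclideanSpace ℝ (Fin D),
      |⟪(Matrix.toEuclideanLin (Pμ - Pν)) v, u⟫| ≤ C * (‖u‖ * ‖v‖) := by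
    intro u v
    rw [hkey u v]
    have intAA : Integrable (fun z => ⟪u, A z⟫ * ⟪v, A z⟫) γ :=
      myIntMul (inner_memℒp hA2 u) (inner_memℒp hA2 v)
    have intBB : Integrable (fun z => ⟪u, B z⟫ * ⟪v, B z⟫) γ :=
      myIntMul (inner_memℒp hB2 u) (inner_memℒp hB2 v)
    have intG : Integrable (fun z =>
        (‖u‖ * ‖v‖) * (‖A z‖ * ‖A z - B z‖) + (‖u‖ * ‖v‖) * (‖A z - B z‖ * ‖B z‖)) γ :=
      ((myIntMul hA2.norm hAB2.norm).const_mul _).add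
        ((myIntMul hAB2.norm hB2.norm).const_mul _)
    calc |∫ z, (⟪u, A z⟫ * ⟪v, A z⟫ - ⟪u, B z⟫ * ⟪v, B z⟫) ∂γ|
        ≤ ∫ z, |⟪u, A z⟫ * ⟪v, A z⟫ - ⟪u, B z⟫ * ⟪v, B z⟫| ∂γ := by
          simpa [Real.norm_eq_abs] using
            norm_integral_le_integral_norm (fun z => ⟪u, A z⟫ * ⟪v, A z⟫ - ⟪u, B z⟫ * ⟪v, B z⟫)
              (μ := γ)
      _ ≤ ∫ z, ((‖u‖ * ‖v‖) * (‖A z‖ * ‖A z - B z‖)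
            + (‖u‖ * ‖v‖) * (‖A z - B z‖ * ‖B z‖)) ∂γ := by
          refine integral_mono (intAA.sub intBB).abs intG fun z => ?_
          have e1 : ⟪u, A z⟫ * ⟪v, A z⟫ - ⟪u, B z⟫ * ⟪v, B z⟫ =
              ⟪u, A z⟫ * (⟪v, A z⟫ - ⟪v, B z⟫) + (⟪u, A z⟫ - ⟪u, B z⟫) * ⟪v, B z⟫ := by ring
          rw [e1, ← inner_sub_right, ← inner_sub_right]
          have h2 : |⟪u, A z⟫ * ⟪v, A z - B z⟫| ≤ (‖u‖ * ‖A z‖) * (‖v‖ * ‖A z - B z‖) := by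
            rw [abs_mul]
            exact mul_le_mul (abs_real_inner_le_norm u _) (abs_real_inner_le_norm v _)
              (abs_nonneg _) (by positivity)
          have h3 : |⟪u, A z - B z⟫ * ⟪v, B z⟫| ≤ (‖u‖ * ‖A z - B z‖) * (‖v‖ * ‖B z‖) := by
            rw [abs_mul]
            exact mul_le_mul (abs_real_inner_le_norm u _) (abs_real_inner_le_norm v _)
              (abs_nonneg _) (by positivity)
          calc |⟪u, A z⟫ * ⟪v, A z - B z⟫ + ⟪u, A z - B z⟫ * ⟪v, B z⟫|
              ≤ |⟪u, A z⟫ * ⟪v, A z - B z⟫| + |⟪u, A z - B z⟫ * ⟪v, B z⟫| := abs_add_le _ _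
            _ ≤ (‖u‖ * ‖A z‖) * (‖v‖ * ‖A z - B z‖) + (‖u‖ * ‖A z - B z‖) * (‖v‖ * ‖B z‖) :=
                add_le_add h2 h3
            _ = (‖u‖ * ‖v‖) * (‖A z‖ * ‖A z - B z‖)
                + (‖u‖ * ‖v‖) * (‖A z - B z‖ * ‖B z‖) := by ring
      _ = (‖u‖ * ‖v‖) * ((∫ z, ‖A z‖ * ‖A z - B z‖ ∂γ) + ∫ z, ‖A z - B z‖ * ‖B z‖ ∂γ) := by
          rw [integral_add ((myIntMul hA2.norm hAB2.norm).const_mul _)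
            ((myIntMul hAB2.norm hB2.norm).const_mul _), integral_const_mul,
            integral_const_mul, mul_add]
      _ ≤ (‖u‖ * ‖v‖) * ((Real.sqrt Pμ.trace * S) + (S * Real.sqrt Pν.trace)) := by
          have c1 : (∫ z, ‖A z‖ * ‖A z - B z‖ ∂γ) ≤ Real.sqrt Pμ.trace * S := by
            have := myCS hA2.norm hAB2.norm
            simp only [norm_norm] at this
            rwa [hS, trace_eq hA2 hPA]
          have c2 : (∫ z, ‖A z - B z‖ * ‖B z‖ ∂γ) ≤ S * Real.sqrt Pν.trace := by
            have := myCS hAB2.norm hB2.norm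
            simp only [norm_norm] at this
            rwa [hS, trace_eq hB2 hPB]
          exact mul_le_mul_of_nonneg_left (add_le_add c1 c2) (by positivity)
      _ = C * (‖u‖ * ‖v‖) := by rw [hC]; ring
  -- conclude
  unfold matrixOpNorm
  refine ContinuousLinearMap.opNorm_le_bound _ hCnn fun v => ?_
  rw [LinearMap.coe_toContinuousLinearMap']
  have h2 : ⟪Matrix.toEuclideanLin (Pμ - Pν) v, Matrix.toEuclideanLin (Pμ - Pν) v⟫ ≤
      (C * ‖v‖) * ‖Matrix.toEuclideanLin (Pμ - Pν) v‖ := by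
    calc ⟪Matrix.toEuclideanLin (Pμ - Pν) v, Matrix.toEuclideanLin (Pμ - Pν) v⟫
        ≤ |⟪Matrix.toEuclideanLin (Pμ - Pν) v, Matrix.toEuclideanLin (Pμ - Pν) v⟫| :=
          le_abs_self _
      _ ≤ C * (‖Matrix.toEuclideanLin (Pμ - Pν) v‖ * ‖v‖) :=
          hbound (Matrix.toEuclideanLin (Pμ - Pν) v) v
      _ = (C * ‖v‖) * ‖Matrix.toEuclideanLin (Pμ - Pν) v‖ := by ring
  exact norm_le_of_inner (by positivity) h2

/-- For probability measures `μ, ν` on `ℝ^D` with means `m_μ, m_ν` and covariances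
`P_μ, P_ν`, and any coupling `γ` of `μ` and `ν`,
`‖P_μ - P_ν‖_op ≤ (tr(P_μ)^{1/2} + tr(P_ν)^{1/2}) E[|X - m_μ - (Y - m_ν)|²]^{1/2}`. -/
theorem covariance_difference_bound {D : ℕ}
    (μ ν : Measure (EuclideanSpace ℝ (Fin D)))
    [IsProbabilityMeasure μ] [IsProbabilityMeasure ν]
    (hμ2 : MemLp id 2 μ) (hν2 : MemLp id 2 ν)
    (mμ mν : EuclideanSpace ℝ (Fin D))
    (hmμ : mμ = ∫ x, x ∂μ) (hmν : mν = ∫ x, x ∂ν)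
    (Pμ Pν : Matrix (Fin D) (Fin D) ℝ)
    (hPμ : Pμ = fun i j => ∫ x, (x i - mμ i) * (x j - mμ j) ∂μ)
    (hPν : Pν = fun i j => ∫ x, (x i - mν i) * (x j - mν j) ∂ν)
    (γ : Measure (EuclideanSpace ℝ (Fin D) × EuclideanSpace ℝ (Fin D)))
    [IsProbabilityMeasure γ]
    (hγ1 : Measure.map Prod.fst γ = μ) (hγ2 : Measure.map Prod.snd γ = ν) :
    matrixOpNorm (Pμ - Pν) ≤
      (Real.sqrt Pμ.trace + Real.sqrt Pν.trace) *
        Real.sqrt (∫ z, ‖z.1 - mμ - (z.2 - mν)‖ ^ 2 ∂γ) := by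
  have hfst : MemLp (fun z : EuclideanSpace ℝ (Fin D) × EuclideanSpace ℝ (Fin D) => z.1) 2 γ := by
    have h := hμ2
    rw [← hγ1] at h
    exact (memLp_map_measure_iff aestronglyMeasurable_id measurable_fst.aemeasurable).mp h
  have hsnd : MemLp (fun z : EuclideanSpace ℝ (Fin D) × EuclideanSpace ℝ (Fin D) => z.2) 2 γ := by
    have h := hν2
    rw [← hγ2] at h
    exact (memLp_map_measure_iff aestronglyMeasurable_id measurable_snd.aemeasurable).mp h
  have hA2 : MemLp (fun z : EuclideanSpace ℝ (Fin D) × EuclideanSpace ℝ (Fin D) =>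
      z.1 - mμ) 2 γ := hfst.sub (memLp_const mμ)
  have hB2 : MemLp (fun z : EuclideanSpace ℝ (Fin D) × EuclideanSpace ℝ (Fin D) =>
      z.2 - mν) 2 γ := hsnd.sub (memLp_const mν)
  have hPA : ∀ i j, Pμ i j = ∫ z : EuclideanSpace ℝ (Fin D) × EuclideanSpace ℝ (Fin D),
      (z.1 - mμ) i * (z.1 - mμ) j ∂γ := by
    intro i j
    rw [hPμ]
    show (∫ x, (x i - mμ i) * (x j - mμ j) ∂μ) = _
    rw [← hγ1, integral_map measurable_fst.aemeasurable (Measurable.aestronglyMeasurable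
      (by fun_prop))]
    rfl
  have hPB : ∀ i j, Pν i j = ∫ z : EuclideanSpace ℝ (Fin D) × EuclideanSpace ℝ (Fin D),
      (z.2 - mν) i * (z.2 - mν) j ∂γ := by
    intro i j
    rw [hPν]
    show (∫ x, (x i - mν i) * (x j - mν j) ∂ν) = _
    rw [← hγ2, integral_map measurable_snd.aemeasurable (Measurable.aestronglyMeasurable
      (by fun_prop))]
    rfl
  exact main_aux hA2 hB2 hPA hPB
end

section
/- Consider the matrix ODE (d/ds) P_s = -P_s Φ R_s Φᵀ P_s - (1/2)(P_prior^{-1} P_s + P_s P_prior^{-1}) + (1/2) P_s, where P_s is symmetric, P_prior is symmetric positive definite, Φ is a fixed matrix, and s ↦ R_s is a family of diagonal positive semidefinite matrices with entries bounded by 1. Then the Frobenius norm satisfies (d/ds)‖P_s‖²_Fr ≤ ‖P_s‖²_Fr, and hence ‖P_s‖_Fr ≤ e^{s/2} ‖P₀‖_Fr for all s ≥ 0 (solutions do not blow up). -/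
open Matrix Finset

lemma myTrace_nonneg {n : ℕ} {A : Matrix (Fin n) (Fin n) ℝ} (hA : A.PosSemidef) :
    0 ≤ A.trace := by
  rw [Matrix.trace]
  refine Finset.sum_nonneg fun i _ => ?_
  have := hA.dotProduct_mulVec_nonneg (Pi.single i 1)
  simpa [Matrix.mulVec_single, dotProduct, star_trivial, Pi.single_apply, Matrix.diag] using this

open scoped MatrixOrder Matrix.Norms.L2Operator in
lemma myTrace_mul_nonneg {n : ℕ} {A B : Matrix (Fin n) (Fin n) ℝ}
    (hA : A.PosSemidef) (hB : B.PosSemidef) : 0 ≤ (A * B).trace := by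
  obtain ⟨T, hT⟩ := CStarAlgebra.nonneg_iff_eq_star_mul_self.mp hA.nonneg
  rw [star_eq_conjTranspose] at hT
  have h1 : (A * B).trace = (T * B * Tᴴ).trace := by
    rw [hT, Matrix.mul_assoc, Matrix.trace_mul_comm, Matrix.mul_assoc]
  rw [h1]
  exact myTrace_nonneg (hB.mul_mul_conjTranspose_same T)

/-- For the covariance ODE
`P' = -P Φ R Φᵀ P - (1/2)(P_prior⁻¹ P + P P_prior⁻¹) + (1/2) P`
with `P_s` symmetric positive semidefinite, `P_prior` positive definite and `R_s`
diagonal positive semidefinite with entries at most `1`, the squared Frobenius norm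
satisfies `(d/ds)‖P_s‖²_Fr ≤ ‖P_s‖²_Fr`, hence `‖P_s‖_Fr ≤ e^{s/2} ‖P₀‖_Fr` for `s ≥ 0`. -/
theorem covariance_ode_frobenius_bound {D N : ℕ}
    (Φ : Matrix (Fin D) (Fin N) ℝ) (Pprior : Matrix (Fin D) (Fin D) ℝ)
    (hPprior : Pprior.PosDef)
    (P : ℝ → Matrix (Fin D) (Fin D) ℝ) (R : ℝ → Matrix (Fin N) (Fin N) ℝ)
    (hPsd : ∀ s, (P s).PosSemidef)
    (hRsd : ∀ s, (R s).PosSemidef)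
    (hRdiag : ∀ s, ∀ i j, i ≠ j → R s i j = 0)
    (hRle : ∀ s i, R s i i ≤ 1)
    (hode : ∀ s, ∀ i j, HasDerivAt (fun t => P t i j)
      ((-(P s * Φ * R s * Φᵀ * P s)
        - (1 / 2 : ℝ) • (Pprior⁻¹ * P s + P s * Pprior⁻¹)
        + (1 / 2 : ℝ) • P s) i j) s) :
    (∀ s, 0 ≤ s →
        deriv (fun t => ∑ i, ∑ j, (P t i j) ^ 2) s ≤ ∑ i, ∑ j, (P s i j) ^ 2) ∧
      ∀ s, 0 ≤ s →
        Real.sqrt (∑ i, ∑ j, (P s i j) ^ 2) ≤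
          Real.exp (s / 2) * Real.sqrt (∑ i, ∑ j, (P 0 i j) ^ 2) := by
  set A : ℝ → Matrix (Fin D) (Fin D) ℝ := fun s =>
    -(P s * Φ * R s * Φᵀ * P s)
      - (1 / 2 : ℝ) • (Pprior⁻¹ * P s + P s * Pprior⁻¹)
      + (1 / 2 : ℝ) • P s with hA
  set f : ℝ → ℝ := fun t => ∑ i, ∑ j, (P t i j) ^ 2 with hf
  set c : ℝ → ℝ := fun s => ∑ i, ∑ j, 2 * P s i j ^ 1 * A s i j with hc
  -- derivative of f
  have hderiv : ∀ s, HasDerivAt f (c s) s := by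
    intro s
    refine HasDerivAt.fun_sum fun i _ => HasDerivAt.fun_sum fun j _ => ?_
    exact (hode s i j).pow 2
  -- symmetry of P s
  have hsymm : ∀ s i j, P s i j = P s j i := by
    intro s i j
    have h := (hPsd s).1
    conv_lhs => rw [← h]
    simp [Matrix.conjTranspose_apply]
  -- trace(Q*Q) = f s
  have hQQ : ∀ s, ((P s) * (P s)).trace = f s := by
    intro s
    rw [Matrix.trace, hf]
    refine Finset.sum_congr rfl fun i _ => ?_
    rw [Matrix.diag, Matrix.mul_apply]
    refine Finset.sum_congr rfl fun j _ => ?_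
    rw [sq, hsymm s j i]
  -- c s = 2 * trace (P s * A s)
  have hcs : ∀ s, c s = 2 * ((P s) * (A s)).trace := by
    intro s
    show (∑ i, ∑ j, 2 * P s i j ^ 1 * A s i j) = _
    rw [Matrix.trace, Finset.mul_sum, Finset.sum_comm]
    refine Finset.sum_congr rfl fun j _ => ?_
    rw [Matrix.diag, Matrix.mul_apply, Finset.mul_sum]
    refine Finset.sum_congr rfl fun i _ => ?_
    rw [pow_one, hsymm s i j]
    ring
  -- key inequality: c s ≤ f s
  have hkey : ∀ s, c s ≤ f s := by
    intro s
    set Q := P s with hQ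
    have hQpsd := hPsd s
    have hQ3 : (Q * Q * Q).PosSemidef := by
      have := hQpsd.pow 3
      have h3 : Q ^ 3 = Q * Q * Q := by rw [pow_succ, pow_two]
      rwa [h3] at this
    have hQ2 : (Q * Q).PosSemidef := by
      have := hQpsd.pow 2
      have h2 : Q ^ 2 = Q * Q := by rw [pow_two]
      rwa [h2] at this
    -- term 1
    have ht1 : 0 ≤ (Q * (Q * Φ * R s * Φᵀ * Q)).trace := by
      have ea : Q * (Q * Φ * R s * Φᵀ * Q) = (Q * Q * Φ * R s * Φᵀ) * Q := by
        simp only [Matrix.mul_assoc]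
      have eb : Q * (Q * Q * Φ * R s * Φᵀ) = (Q * Q * Q * Φ * R s) * Φᵀ := by
        simp only [Matrix.mul_assoc]
      have ec : Φᵀ * (Q * Q * Q * Φ * R s) = (Φᵀ * (Q * Q * Q) * Φ) * R s := by
        simp only [Matrix.mul_assoc]
      have hΦ : Φᵀ = Φᴴ := (Matrix.conjTranspose_eq_transpose_of_trivial Φ).symm
      rw [ea, Matrix.trace_mul_comm, eb, Matrix.trace_mul_comm, ec]
      refine myTrace_mul_nonneg ?_ (hRsd s)
      rw [hΦ]
      exact hQ3.conjTranspose_mul_mul_same Φ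
    -- term 2
    have hPinv : (Pprior⁻¹).PosSemidef := hPprior.inv.posSemidef
    have ht2 : 0 ≤ (Q * (Pprior⁻¹ * Q)).trace := by
      have ea : Q * (Pprior⁻¹ * Q) = (Q * Pprior⁻¹) * Q := by
        simp only [Matrix.mul_assoc]
      have eb : Q * (Q * Pprior⁻¹) = (Q * Q) * Pprior⁻¹ := by
        simp only [Matrix.mul_assoc]
      rw [ea, Matrix.trace_mul_comm, eb]
      exact myTrace_mul_nonneg hQ2 hPinv
    have ht3 : 0 ≤ (Q * (Q * Pprior⁻¹)).trace := by
      have eb : Q * (Q * Pprior⁻¹) = (Q * Q) * Pprior⁻¹ := by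
        simp only [Matrix.mul_assoc]
      rw [eb]
      exact myTrace_mul_nonneg hQ2 hPinv
    -- expand trace(Q * A s)
    have hexp : (Q * A s).trace
        = -(Q * (Q * Φ * R s * Φᵀ * Q)).trace
          - (1 / 2 : ℝ) * ((Q * (Pprior⁻¹ * Q)).trace + (Q * (Q * Pprior⁻¹)).trace)
          + (1 / 2 : ℝ) * (Q * Q).trace := by
      rw [hA]
      simp only [Matrix.mul_sub, Matrix.mul_add, Matrix.mul_neg, Matrix.mul_smul,
        Matrix.trace_sub, Matrix.trace_add, Matrix.trace_neg, Matrix.trace_smul,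
        smul_eq_mul]
      rfl
    have hft : (Q * Q).trace = f s := hQQ s
    rw [hcs s, hexp, ← hft]
    linarith
  -- Gronwall
  have hdiff : Differentiable ℝ f := fun t => (hderiv t).differentiableAt
  have hfnn : ∀ t, 0 ≤ f t := fun t =>
    Finset.sum_nonneg fun i _ => Finset.sum_nonneg fun j _ => sq_nonneg _
  set g : ℝ → ℝ := fun t => Real.exp (-t) * f t with hg
  have hgderiv : ∀ t, HasDerivAt g (Real.exp (-t) * (-1) * f t + Real.exp (-t) * c t) t := by
    intro t
    exact ((hasDerivAt_neg t).exp).mul (hderiv t)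
  have hganti : Antitone g := by
    refine antitone_of_deriv_nonpos (fun t => (hgderiv t).differentiableAt) fun t => ?_
    rw [(hgderiv t).deriv]
    have h1 := hkey t
    have h2 := Real.exp_pos (-t)
    nlinarith
  have hbound : ∀ s, 0 ≤ s → f s ≤ Real.exp s * f 0 := by
    intro s hs
    have h1 : g s ≤ g 0 := hganti hs
    rw [hg] at h1
    simp only [neg_zero, Real.exp_zero, one_mul] at h1
    have h2 : Real.exp s * (Real.exp (-s) * f s) ≤ Real.exp s * f 0 :=
      mul_le_mul_of_nonneg_left h1 (Real.exp_pos s).le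
    rwa [← mul_assoc, ← Real.exp_add, add_neg_cancel, Real.exp_zero, one_mul] at h2
  constructor
  · intro s _
    rw [show deriv (fun t => ∑ i, ∑ j, (P t i j) ^ 2) s = c s from (hderiv s).deriv]
    exact hkey s
  · intro s hs
    have h1 : Real.sqrt (f s) ≤ Real.sqrt (Real.exp s * f 0) :=
      Real.sqrt_le_sqrt (hbound s hs)
    have h2 : Real.sqrt (Real.exp s * f 0) = Real.exp (s / 2) * Real.sqrt (f 0) := by
      rw [Real.sqrt_mul (Real.exp_nonneg s)]
      congr 1
      have : Real.exp s = Real.exp (s / 2) ^ 2 := by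
        rw [sq, ← Real.exp_add]
        ring_nf
      rw [this, Real.sqrt_sq (Real.exp_nonneg _)]
    rw [h2] at h1
    exact h1
end
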